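/- Let p be a prime and let C = (V, R) be a primitive association scheme that is a p-scheme. Then C is regular (every basis relation has valency 1), |V| = p, and every non-diagonal basis digraph of C is isomorphic to the directed cycle C⃗^p. -/

import Mathlib

open Set Function

section Defs

variable {V : Type*}

/-- The diagonal relation on `V`. -/
def diag (V : Type*) : Set (V × V) := {x | x.1 = x.2}

/-- The transpose of a relation. -/
def transp (R : Set (V × V)) : Set (V × V) := {x | (x.2, x.1) ∈ R}

/-- Relational composition (product of relations). -/
def comp (R S : Set (V × V)) : Set (V × V) := {x | ∃ w, (x.1, w) ∈ R ∧ (w, x.2) ∈ S}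

/-- The `n`-fold relational power, with `R^0` the diagonal. -/
def relPow (R : Set (V × V)) : ℕ → Set (V × V)
  | 0 => diag V
  | n + 1 => comp (relPow R n) R

/-- `⟨R⟩`, the union of all relational powers of `R`. -/
def gen (R : Set (V × V)) : Set (V × V) := ⋃ i, relPow R i

/-- Strong connectivity: every ordered pair is joined by a directed walk of positive length
(so every vertex has nonempty out-neighborhood). -/
def StronglyConnected (R : Set (V × V)) : Prop :=
  ∀ u v : V, ∃ n, 0 < n ∧ (u, v) ∈ relPow R n

/-- A digraph `(V, R)` is cyclically `p`-partite: the vertices are partitioned into `p`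
nonempty parts indexed by `ZMod p` such that every arc goes from part `r` to part `r + 1`. -/
def CyclicallyPartite (p : ℕ) (R : Set (V × V)) : Prop :=
  ∃ f : V → ZMod p, Surjective f ∧ ∀ u v : V, (u, v) ∈ R → f v = f u + 1

/-- The induced subdigraph on `X ⊆ V` is cyclically `p`-partite. -/
def CyclicallyPartiteOn (p : ℕ) (X : Set V) (R : Set (V × V)) : Prop :=
  ∃ f : V → ZMod p, (∀ r : ZMod p, ∃ v ∈ X, f v = r) ∧
    ∀ u ∈ X, ∀ v ∈ X, (u, v) ∈ R → f v = f u + 1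

/-- The out-neighborhood `R(u)`. -/
def neighb (R : Set (V × V)) (u : V) : Set V := {v | (u, v) ∈ R}

/-- A homogeneous coherent configuration (association scheme) on a finite set `V`. -/
structure AssocScheme (V : Type*) [Fintype V] where
  classes : Set (Set (V × V))
  part : ∀ x : V × V, ∃! R, R ∈ classes ∧ x ∈ R
  nonempty_mem : ∀ R ∈ classes, R.Nonempty
  transp_mem : ∀ R ∈ classes, transp R ∈ classes
  diag_mem : diag V ∈ classes
  inter : ∀ R ∈ classes, ∀ S ∈ classes, ∀ T ∈ classes, ∀ x ∈ T, ∀ y ∈ T,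
    ({w : V | (Prod.fst x, w) ∈ R ∧ (w, Prod.snd x) ∈ S}).ncard =
    ({w : V | (Prod.fst y, w) ∈ R ∧ (w, Prod.snd y) ∈ S}).ncard

/-- A `p`-scheme: every basis relation has cardinality a power of `p`. -/
def IsPScheme (p : ℕ) {V : Type*} [Fintype V] (C : AssocScheme V) : Prop :=
  ∀ R ∈ C.classes, ∃ k : ℕ, R.ncard = p ^ k

/-- A scheme equivalence: a union of basis relations that is an equivalence relation on `V`. -/
def IsSchemeEquiv {V : Type*} [Fintype V] (C : AssocScheme V) (E : Set (V × V)) : Prop :=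
  (∃ D ⊆ C.classes, E = ⋃₀ D) ∧ Equivalence (fun u v : V => (u, v) ∈ E)

/-- The set of classes of an equivalence relation `E` on `V`. -/
def classesOf {V : Type*} (E : Set (V × V)) : Set (Set V) :=
  {X | ∃ u : V, X = {v | (u, v) ∈ E}}

/-- The quotient relation `R_{V/E}` on the set of classes of `E`. -/
def quotRel {V : Type*} (E R : Set (V × V)) : Set (Set V × Set V) :=
  {q | q.1 ∈ classesOf E ∧ q.2 ∈ classesOf E ∧ (R ∩ q.1 ×ˢ q.2).Nonempty}

/-- A maximal scheme equivalence: `E ≠ V × V` and no scheme equivalence other than `V × V`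
properly contains it. -/
def MaximalEquiv {V : Type*} [Fintype V] (C : AssocScheme V) (E : Set (V × V)) : Prop :=
  IsSchemeEquiv C E ∧ E ≠ Set.univ ∧
    ∀ F, IsSchemeEquiv C F → E ⊆ F → F ≠ Set.univ → F = E

end Defs

section Aux

variable {V : Type*} [Fintype V]

/-- The graph of a function, as a relation. -/
def Gr (f : V → V) : Set (V × V) := {x | x.2 = f x.1}

lemma mem_class (C : AssocScheme V) (x : V × V) : ∃ R ∈ C.classes, x ∈ R := by
  obtain ⟨R, hR, -⟩ := C.part x
  exact ⟨R, hR.1, hR.2⟩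

lemma class_eq (C : AssocScheme V) {S S' : Set (V × V)} (hS : S ∈ C.classes)
    (hS' : S' ∈ C.classes) {x : V × V} (hx : x ∈ S) (hx' : x ∈ S') : S = S' := by
  obtain ⟨R, -, hu⟩ := C.part x
  rw [hu S ⟨hS, hx⟩, hu S' ⟨hS', hx'⟩]

lemma transp_gr (π : Equiv.Perm V) : transp (Gr ⇑π) = Gr ⇑π⁻¹ := by
  ext ⟨u, v⟩
  simp only [transp, Gr, Set.mem_setOf_eq]
  constructor
  · rintro rfl; simp
  · rintro rfl; simp

lemma ncard_transp (S : Set (V × V)) : (transp S).ncard = S.ncard := by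
  have h : transp S = Prod.swap '' S := by
    ext ⟨u, v⟩
    simp only [transp, Set.mem_setOf_eq, Set.mem_image, Prod.swap]
    constructor
    · intro h; exact ⟨(v, u), h, rfl⟩
    · rintro ⟨⟨a, b⟩, hab, h⟩; cases h; exact hab
  rw [h, Set.ncard_image_of_injective _ Prod.swap_injective]

lemma ncard_gr (f : V → V) : (Gr f).ncard = Fintype.card V := by
  have h : Gr f = (fun u => (u, f u)) '' Set.univ := by
    ext ⟨u, v⟩
    simp only [Gr, Set.mem_setOf_eq, Set.image_univ, Set.mem_range, Prod.mk.injEq]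
    constructor
    · rintro rfl; exact ⟨u, rfl, rfl⟩
    · rintro ⟨a, rfl, rfl⟩; rfl
  rw [h, Set.ncard_image_of_injective _ (fun a b h => (Prod.mk.injEq ..).mp h |>.1),
    Set.ncard_univ, Nat.card_eq_fintype_card]

lemma ncard_neighb_const (C : AssocScheme V) {S : Set (V × V)} (hS : S ∈ C.classes)
    (u v : V) : (neighb S u).ncard = (neighb S v).ncard := by
  have h := C.inter S hS (transp S) (C.transp_mem S hS) (diag V) C.diag_mem
    (u, u) rfl (v, v) rfl
  have e : ∀ w : V, {z : V | (w, z) ∈ S ∧ (z, w) ∈ transp S} = neighb S w := by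
    intro w; ext z; simp [transp, neighb, and_self]
  rw [e u, e v] at h
  exact h

lemma ncard_class (C : AssocScheme V) {S : Set (V × V)} (hS : S ∈ C.classes) (u : V) :
    S.ncard = Fintype.card V * (neighb S u).ncard := by
  classical
  have hfib : ∀ w : V, ((Set.toFinite (neighb S w)).toFinset.image fun v => (w, v)) =
      (Set.toFinite S).toFinset.filter (fun x => x.1 = w) := by
    intro w
    ext ⟨a, b⟩
    simp only [Finset.mem_image, Set.Finite.mem_toFinset, Finset.mem_filter, neighb,
      Set.mem_setOf_eq, Prod.mk.injEq]
    constructor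
    · rintro ⟨v, hv, rfl, rfl⟩; exact ⟨hv, rfl⟩
    · rintro ⟨hab, rfl⟩; exact ⟨b, hab, rfl, rfl⟩
  have hcard : ∀ w : V, ((Set.toFinite S).toFinset.filter (fun x => x.1 = w)).card =
      (neighb S u).ncard := by
    intro w
    rw [← hfib w, Finset.card_image_of_injective _ (fun a b h => ((Prod.mk.injEq ..).mp h).2),
      ← Set.ncard_eq_toFinset_card (neighb S w), ncard_neighb_const C hS w u]
  rw [Set.ncard_eq_toFinset_card S]
  rw [Finset.card_eq_sum_card_fiberwise (f := Prod.fst) (t := Finset.univ)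
    (fun x _ => Finset.mem_univ _)]
  simp only [hcard]
  rw [Finset.sum_const, Finset.card_univ, smul_eq_mul]

lemma ncard_diag : (diag V).ncard = Fintype.card V := by
  have h : diag V = Gr (id : V → V) := by
    ext ⟨u, v⟩; simp [diag, Gr, eq_comm]
  rw [h, ncard_gr]

lemma exists_thin {p : ℕ} (hp : p.Prime) (C : AssocScheme V) (hcard : 2 ≤ Fintype.card V)
    (hps : IsPScheme p C) :
    ∃ T ∈ C.classes, T ≠ diag V ∧ ∀ u : V, (neighb T u).ncard = 1 := by
  classical
  obtain ⟨u₀⟩ : Nonempty V := Fintype.card_pos_iff.mp (by omega)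
  -- the cardinality of V is a power of p
  obtain ⟨m, hm⟩ := hps (diag V) C.diag_mem
  rw [ncard_diag] at hm
  have hm1 : 1 ≤ m := by
    rcases Nat.eq_zero_or_pos m with h | h
    · rw [h, pow_zero] at hm; omega
    · exact h
  have hpn : p ∣ Fintype.card V := by
    rw [hm]; exact dvd_pow_self p (by omega)
  -- sum of valencies
  set F : Finset (Set (V × V)) := (Set.toFinite C.classes).toFinset with hF
  have hmemF : ∀ S, S ∈ F ↔ S ∈ C.classes := fun S => Set.Finite.mem_toFinset _
  set g : Set (V × V) → Finset V := fun S => (Set.toFinite (neighb S u₀)).toFinset with hg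
  have hcov : F.biUnion g = Finset.univ := by
    apply Finset.eq_univ_of_forall
    intro v
    obtain ⟨R, hR, hv⟩ := mem_class C (u₀, v)
    exact Finset.mem_biUnion.mpr ⟨R, (hmemF R).mpr hR, (Set.Finite.mem_toFinset _).mpr hv⟩
  have hdisj : ∀ S ∈ F, ∀ S' ∈ F, S ≠ S' → Disjoint (g S) (g S') := by
    intro S hS S' hS' hne
    refine Finset.disjoint_left.mpr fun v hv hv' => hne ?_
    simp only [hg, Set.Finite.mem_toFinset] at hv hv'
    exact class_eq C ((hmemF S).mp hS) ((hmemF S').mp hS') hv hv'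
  have hsum : ∑ S ∈ F, (neighb S u₀).ncard = Fintype.card V := by
    have h2 := Finset.card_biUnion hdisj
    rw [hcov, Finset.card_univ] at h2
    rw [h2]
    exact Finset.sum_congr rfl fun S _ => Set.ncard_eq_toFinset_card (neighb S u₀)
  have hdiagF : diag V ∈ F := (hmemF _).mpr C.diag_mem
  have hdiag1 : (neighb (diag V) u₀).ncard = 1 := by
    have h3 : neighb (diag V) u₀ = {u₀} := by ext v; simp [neighb, diag, eq_comm]
    rw [h3, Set.ncard_singleton]
  -- some non-diagonal class has valency not divisible by p
  have hkey : ∃ S ∈ F, S ≠ diag V ∧ ¬ p ∣ (neighb S u₀).ncard := by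
    by_contra h
    push_neg at h
    have hdvd : p ∣ ∑ S ∈ F.erase (diag V), (neighb S u₀).ncard := by
      refine Finset.dvd_sum fun S hS => ?_
      obtain ⟨hSne, hSF⟩ := Finset.mem_erase.mp hS
      exact h S hSF hSne
    have hsum' : ∑ S ∈ F.erase (diag V), (neighb S u₀).ncard = Fintype.card V - 1 := by
      have h4 := Finset.add_sum_erase F (fun S => (neighb S u₀).ncard) hdiagF
      simp only [hdiag1] at h4
      omega
    rw [hsum'] at hdvd
    have h1 : Fintype.card V - (Fintype.card V - 1) = 1 := by omega
    have hp1 : p ∣ 1 := h1 ▸ Nat.dvd_sub hpn hdvd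
    have := Nat.le_of_dvd one_pos hp1
    have := hp.one_lt
    omega
  obtain ⟨S, hSF, hSne, hnd⟩ := hkey
  have hSc : S ∈ C.classes := (hmemF S).mp hSF
  refine ⟨S, hSc, hSne, ?_⟩
  obtain ⟨k, hk⟩ := hps S hSc
  have hnceq := ncard_class C hSc u₀
  have hdvdk : (neighb S u₀).ncard ∣ p ^ k := ⟨Fintype.card V, by rw [← hk, hnceq]; ring⟩
  obtain ⟨j, hjk, hj⟩ := (Nat.dvd_prime_pow hp).mp hdvdk
  have hj0 : j = 0 := by
    by_contra hj0
    exact hnd (hj ▸ dvd_pow_self p hj0)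
  have h1 : (neighb S u₀).ncard = 1 := by rw [hj, hj0, pow_zero]
  intro u
  rw [ncard_neighb_const C hSc u u₀, h1]

lemma thin_perm (C : AssocScheme V) {T : Set (V × V)} (hT : T ∈ C.classes)
    (h1 : ∀ u : V, (neighb T u).ncard = 1) : ∃ π : Equiv.Perm V, T = Gr ⇑π := by
  classical
  have hcard0 : 0 < Fintype.card V := by
    obtain ⟨x, hx⟩ := C.nonempty_mem T hT
    exact Fintype.card_pos_iff.mpr ⟨x.1⟩
  have hsig : ∀ u : V, ∃ v, neighb T u = {v} := fun u => Set.ncard_eq_one.mp (h1 u)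
  choose σ hσ using hsig
  have hTg : T = Gr σ := by
    ext ⟨u, v⟩
    have := hσ u
    constructor
    · intro h
      have : v ∈ neighb T u := h
      rw [hσ u] at this
      exact this
    · intro h
      have hv : v = σ u := h
      have : σ u ∈ neighb T u := by rw [hσ u]; rfl
      rw [hv]; exact this
  -- transpose valency 1
  have htr1 : ∀ v : V, (neighb (transp T) v).ncard = 1 := by
    intro v
    have hcT : T.ncard = Fintype.card V * 1 := by
      rw [ncard_class C hT v, h1 v]
    have hcT' : (transp T).ncard = Fintype.card V * (neighb (transp T) v).ncard :=
      ncard_class C (C.transp_mem T hT) v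
    rw [ncard_transp, hcT] at hcT'
    exact (Nat.eq_of_mul_eq_mul_left hcard0 hcT').symm
  have hinj : Function.Injective σ := by
    intro a b hab
    obtain ⟨w, hw⟩ := Set.ncard_eq_one.mp (htr1 (σ a))
    have ha : a ∈ neighb (transp T) (σ a) := by
      show (σ a, a) ∈ transp T
      show (a, σ a) ∈ T
      rw [hTg]; rfl
    have hb : b ∈ neighb (transp T) (σ a) := by
      show (σ a, b) ∈ transp T
      show (b, σ a) ∈ T
      rw [hTg]; exact hab
    rw [hw] at ha hb
    rw [Set.mem_singleton_iff.mp ha, Set.mem_singleton_iff.mp hb]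
  exact ⟨Equiv.ofBijective σ (Finite.injective_iff_bijective.mp hinj), hTg⟩

lemma comp_gr (S : Set (V × V)) (π : Equiv.Perm V) :
    comp S (Gr ⇑π) = (fun x : V × V => (x.1, π x.2)) '' S := by
  ext ⟨u, v⟩
  constructor
  · rintro ⟨w, hw, hv⟩
    have hv' : v = π w := hv
    exact ⟨(u, w), hw, by rw [hv']⟩
  · rintro ⟨⟨a, b⟩, hab, heq⟩
    injection heq with h1 h2
    subst h1; subst h2
    exact ⟨b, hab, rfl⟩

lemma gr_comp_gr (f g : V → V) : comp (Gr f) (Gr g) = Gr (g ∘ f) := by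
  ext ⟨u, v⟩
  constructor
  · rintro ⟨w, h1, h2⟩
    have h1' : w = f u := h1
    subst h1'
    exact h2
  · intro h
    exact ⟨f u, rfl, h⟩

lemma class_sub_comp (C : AssocScheme V) {S T W : Set (V × V)} (hS : S ∈ C.classes)
    (hT : T ∈ C.classes) (hW : W ∈ C.classes) (π : Equiv.Perm V) (hTg : T = Gr ⇑π)
    (hne : (W ∩ comp S T).Nonempty) : W ⊆ comp S T := by
  obtain ⟨⟨a, b⟩, hWab, hCab⟩ := hne
  rintro ⟨x, y⟩ hxy
  have hI := C.inter S hS T hT W hW (x, y) hxy (a, b) hWab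
  -- right side has exactly one point
  have hRb : {w : V | (a, w) ∈ S ∧ (w, b) ∈ T} = {π⁻¹ b} := by
    obtain ⟨w₀, hw₀S, hw₀T⟩ := hCab
    have hw₀ : w₀ = π⁻¹ b := by
      rw [hTg] at hw₀T
      have : b = π w₀ := hw₀T
      simp [this]
    ext w
    simp only [Set.mem_setOf_eq, Set.mem_singleton_iff, hTg]
    constructor
    · rintro ⟨-, hwT⟩
      have : b = π w := hwT
      simp [this]
    · rintro rfl
      refine ⟨hw₀ ▸ hw₀S, ?_⟩
      show b = π (π⁻¹ b)
      simp
  rw [hRb, Set.ncard_singleton] at hI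
  have hI' : {w : V | (x, w) ∈ S ∧ (w, y) ∈ T}.ncard = 1 := hI
  have hne' : {w : V | (x, w) ∈ S ∧ (w, y) ∈ T}.Nonempty :=
    Set.nonempty_of_ncard_ne_zero (by rw [hI']; exact one_ne_zero)
  obtain ⟨w, hwS, hwT⟩ := hne'
  exact ⟨w, hwS, hwT⟩

lemma comp_mem_classes (C : AssocScheme V) {S T : Set (V × V)} (hS : S ∈ C.classes)
    (hT : T ∈ C.classes) (π : Equiv.Perm V) (hTg : T = Gr ⇑π) : comp S T ∈ C.classes := by
  obtain ⟨⟨a₀, b₀⟩, hab₀⟩ := C.nonempty_mem S hS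
  have hx₀ : (a₀, π b₀) ∈ comp S T := ⟨b₀, hab₀, by rw [hTg]; rfl⟩
  obtain ⟨U, hU, hxU⟩ := mem_class C (a₀, π b₀)
  have hUsub : U ⊆ comp S T :=
    class_sub_comp C hS hT hU π hTg ⟨(a₀, π b₀), hxU, hx₀⟩
  -- image of U under (id, π⁻¹) is contained in S
  have hT' : transp T ∈ C.classes := C.transp_mem T hT
  have hT'g : transp T = Gr ⇑π⁻¹ := by rw [hTg]; exact transp_gr π
  have hΨU : comp U (transp T) ⊆ S := by
    rw [hT'g, comp_gr]
    rintro ⟨u, v⟩ ⟨⟨c, d⟩, hcd, heq⟩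
    obtain ⟨w, hwS, hwT⟩ := hUsub hcd
    rw [hTg] at hwT
    have hdw : d = π w := hwT
    cases heq
    have : π⁻¹ d = w := by rw [hdw]; simp
    rw [this]
    exact hwS
  have hSU : S = comp U (transp T) := by
    have hmeet : (S ∩ comp U (transp T)).Nonempty := by
      have hUy : (a₀, π b₀) ∈ U := hxU
      have : (a₀, b₀) ∈ comp U (transp T) := by
        rw [hT'g, comp_gr]
        exact ⟨(a₀, π b₀), hUy, by simp⟩
      exact ⟨(a₀, b₀), hΨU this, this⟩
    exact Set.Subset.antisymm
      (class_sub_comp C hU hT' hS π⁻¹ hT'g hmeet) hΨU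
  have hfin : comp S T = U := by
    rw [hSU, hT'g, hTg, comp_gr, comp_gr]
    rw [Set.image_image]
    simp only [Equiv.Perm.inv_def, Equiv.apply_symm_apply]
    exact Set.image_id U
  rw [hfin]
  exact hU

lemma relPow_mem (C : AssocScheme V) {T : Set (V × V)} (hT : T ∈ C.classes)
    (π : Equiv.Perm V) (hTg : T = Gr ⇑π) (n : ℕ) :
    relPow T n ∈ C.classes ∧ relPow T n = Gr ⇑(π ^ n) := by
  induction n with
  | zero =>
    refine ⟨C.diag_mem, ?_⟩
    ext ⟨u, v⟩; simp [relPow, diag, Gr, eq_comm]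
  | succ n ih =>
    obtain ⟨ihm, ihg⟩ := ih
    constructor
    · show comp (relPow T n) T ∈ C.classes
      exact comp_mem_classes C ihm hT π hTg
    · show comp (relPow T n) T = Gr ⇑(π ^ (n + 1))
      rw [ihg, hTg, gr_comp_gr]
      have : ⇑π ∘ ⇑(π ^ n) = ⇑(π ^ (n + 1)) := by
        funext x
        show π ((π ^ n) x) = (π ^ (n + 1)) x
        rw [pow_succ']
        rfl
      rw [this]

lemma gen_transitive (C : AssocScheme V)
    (hprim : ∀ E : Set (V × V), IsSchemeEquiv C E → E = diag V ∨ E = Set.univ)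
    {T : Set (V × V)} (hT : T ∈ C.classes) (hTd : T ≠ diag V)
    (π : Equiv.Perm V) (hTg : T = Gr ⇑π) :
    ∀ u v : V, ∃ m : ℕ, v = (π ^ m) u := by
  have hrel : ∀ n, relPow T n = Gr ⇑(π ^ n) := fun n => (relPow_mem C hT π hTg n).2
  have hmemgen : ∀ (u v : V), (u, v) ∈ gen T ↔ ∃ m : ℕ, v = (π ^ m) u := by
    intro u v
    rw [gen]
    simp only [Set.mem_iUnion]
    constructor
    · rintro ⟨i, hi⟩
      rw [hrel i] at hi
      exact ⟨i, hi⟩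
    · rintro ⟨m, hm⟩
      exact ⟨m, by rw [hrel m]; exact hm⟩
  have hequiv : IsSchemeEquiv C (gen T) := by
    constructor
    · refine ⟨Set.range (relPow T), ?_, (Set.sUnion_range _).symm⟩
      rintro R ⟨n, rfl⟩
      exact (relPow_mem C hT π hTg n).1
    · constructor
      · intro u
        rw [hmemgen]
        exact ⟨0, by simp⟩
      · intro u v h
        rw [hmemgen] at h ⊢
        obtain ⟨n, rfl⟩ := h
        have hNpos : 0 < orderOf π := orderOf_pos π
        refine ⟨n * (orderOf π - 1), ?_⟩
        have h5 : (π ^ (n * (orderOf π - 1))) ((π ^ n) u) =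
            (π ^ (n * (orderOf π - 1) + n)) u := by
          rw [pow_add]; rfl
        rw [h5]
        have he : n * (orderOf π - 1) + n = orderOf π * n := by
          have h6 : orderOf π - 1 + 1 = orderOf π := Nat.sub_add_cancel hNpos
          calc n * (orderOf π - 1) + n = n * (orderOf π - 1 + 1) := by ring
            _ = orderOf π * n := by rw [h6]; ring
        rw [he, pow_mul, pow_orderOf_eq_one, one_pow]
        rfl
      · intro u v w h1 h2
        rw [hmemgen] at h1 h2 ⊢
        obtain ⟨m, rfl⟩ := h1
        obtain ⟨n, rfl⟩ := h2
        exact ⟨n + m, by rw [pow_add]; rfl⟩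
  rcases hprim (gen T) hequiv with h | h
  · exfalso
    apply hTd
    have hfix : ∀ u : V, π u = u := by
      intro u
      have hmem : (u, π u) ∈ gen T := by
        rw [hmemgen]; exact ⟨1, by simp⟩
      rw [h] at hmem
      exact hmem.symm
    rw [hTg]
    ext ⟨u, v⟩
    simp only [Gr, diag, Set.mem_setOf_eq]
    rw [hfix u]
    exact eq_comm
  · intro u v
    have : (u, v) ∈ gen T := by rw [h]; trivial
    rwa [hmemgen] at this

lemma fix_pow_eq_one (π : Equiv.Perm V) (u₀ : V) (htrans : ∀ v : V, ∃ m : ℕ, v = (π ^ m) u₀)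
    {k : ℕ} (hfix : (π ^ k) u₀ = u₀) : π ^ k = 1 := by
  ext v
  obtain ⟨m, rfl⟩ := htrans v
  have hcomm : π ^ k * π ^ m = π ^ m * π ^ k := by
    rw [← pow_add, ← pow_add, add_comm]
  calc (π ^ k) ((π ^ m) u₀) = (π ^ k * π ^ m) u₀ := rfl
    _ = (π ^ m * π ^ k) u₀ := by rw [hcomm]
    _ = (π ^ m) ((π ^ k) u₀) := rfl
    _ = (π ^ m) u₀ := by rw [hfix]

lemma orderOf_eq_card (π : Equiv.Perm V) (u₀ : V)
    (htrans : ∀ v : V, ∃ m : ℕ, v = (π ^ m) u₀) : orderOf π = Fintype.card V := by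
  set N := orderOf π with hN
  have hNpos : 0 < N := orderOf_pos π
  have haux : ∀ a b : ℕ, a ≤ b → (π ^ a) u₀ = (π ^ b) u₀ → (π ^ (b - a)) u₀ = u₀ := by
    intro a b hab h
    have : (π ^ a) ((π ^ (b - a)) u₀) = (π ^ a) u₀ := by
      calc (π ^ a) ((π ^ (b - a)) u₀) = (π ^ a * π ^ (b - a)) u₀ := rfl
        _ = (π ^ b) u₀ := by rw [← pow_add, Nat.add_sub_cancel' hab]
        _ = (π ^ a) u₀ := h.symm
    exact (π ^ a).injective this
  have key : ∀ a b : Fin N, (a : ℕ) ≤ (b : ℕ) →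
      (π ^ (a : ℕ)) u₀ = (π ^ (b : ℕ)) u₀ → a = b := by
    intro a b h hab
    have hfix := haux a b h hab
    have hone := fix_pow_eq_one π u₀ htrans hfix
    have hdvd : N ∣ (b : ℕ) - (a : ℕ) := orderOf_dvd_of_pow_eq_one hone
    have hlt : (b : ℕ) - (a : ℕ) < N := lt_of_le_of_lt (Nat.sub_le _ _) b.isLt
    have h0 : (b : ℕ) - (a : ℕ) = 0 := Nat.eq_zero_of_dvd_of_lt hdvd hlt
    exact Fin.ext (by omega)
  have hinj : Function.Injective (fun j : Fin N => (π ^ (j : ℕ)) u₀) := by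
    intro a b hab
    simp only at hab
    rcases le_total (a : ℕ) (b : ℕ) with h | h
    · exact key a b h hab
    · exact (key b a h hab.symm).symm
  have hsurj : Function.Surjective (fun j : Fin N => (π ^ (j : ℕ)) u₀) := by
    intro v
    obtain ⟨m, rfl⟩ := htrans v
    refine ⟨⟨m % N, Nat.mod_lt m hNpos⟩, ?_⟩
    simp only
    have : π ^ (m % N) = π ^ m := pow_eq_pow_iff_modEq.mpr (Nat.mod_modEq m N)
    rw [this]
  have := Fintype.card_of_bijective ⟨hinj, hsurj⟩
  rwa [Fintype.card_fin] at this

end Aux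

/-- a primitive association scheme which is a `p`-scheme is regular on `p` points,
and every non-diagonal basis digraph is isomorphic to the directed cycle on `p` vertices. -/
theorem primitive_pScheme {V : Type*} [Fintype V] {p : ℕ} (hp : p.Prime)
    (C : AssocScheme V) (hcard : 2 ≤ Fintype.card V)
    (hprim : ∀ E : Set (V × V), IsSchemeEquiv C E → E = diag V ∨ E = Set.univ)
    (hps : IsPScheme p C) :
    (∀ R ∈ C.classes, ∀ u : V, (neighb R u).ncard = 1) ∧
    Fintype.card V = p ∧
    (∀ R ∈ C.classes, R ≠ diag V →
      ∃ e : V ≃ ZMod p, ∀ u v : V, (u, v) ∈ R ↔ e v = e u + 1) := by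
  classical
  obtain ⟨T, hT, hTd, h1⟩ := exists_thin hp C hcard hps
  obtain ⟨π, hTg⟩ := thin_perm C hT h1
  have htrans2 := gen_transitive C hprim hT hTd π hTg
  obtain ⟨u₀⟩ : Nonempty V := Fintype.card_pos_iff.mp (by omega)
  have htrans : ∀ v : V, ∃ m : ℕ, v = (π ^ m) u₀ := fun v => htrans2 u₀ v
  have hord : orderOf π = Fintype.card V := orderOf_eq_card π u₀ htrans
  -- every class is the graph of a power of π
  have hclassgr : ∀ R ∈ C.classes, ∃ m : ℕ, R = Gr ⇑(π ^ m) := by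
    intro R hR
    obtain ⟨⟨a, b⟩, hab⟩ := C.nonempty_mem R hR
    obtain ⟨m, hm⟩ := htrans2 a b
    obtain ⟨hmem, hgr⟩ := relPow_mem C hT π hTg m
    refine ⟨m, ?_⟩
    have hm' : (a, b) ∈ relPow T m := by rw [hgr]; exact hm
    rw [← hgr]
    exact class_eq C hR hmem hab hm'
  have hnb : ∀ (f : V → V) (u : V), neighb (Gr f) u = {f u} := by
    intro f u; ext v; simp [neighb, Gr]
  -- |V| = p
  obtain ⟨k, hk⟩ := hps T hT
  have hkT : Fintype.card V = p ^ k := by rw [← hk, hTg, ncard_gr]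
  have hk1 : 1 ≤ k := by
    rcases Nat.eq_zero_or_pos k with h | h
    · rw [h, pow_zero] at hkT; omega
    · exact h
  obtain ⟨j, rfl⟩ : ∃ j, k = j + 1 := ⟨k - 1, by omega⟩
  have hqpos : 0 < p ^ (j) := Nat.pow_pos hp.pos
  obtain ⟨hT2mem, hT2gr⟩ := relPow_mem C hT π hTg (p ^ (j))
  have hT2d : relPow T (p ^ (j)) ≠ diag V := by
    intro h
    have hfix : ∀ u : V, (π ^ p ^ (j)) u = u := by
      intro u
      have hm : (u, (π ^ p ^ (j)) u) ∈ Gr ⇑(π ^ p ^ (j)) := rfl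
      rw [← hT2gr, h] at hm
      exact hm.symm
    have hone : π ^ p ^ (j) = 1 := Equiv.ext hfix
    have hdvd : orderOf π ∣ p ^ (j) := orderOf_dvd_of_pow_eq_one hone
    rw [hord, hkT] at hdvd
    have hle : p ^ (j + 1) ≤ p ^ (j) := Nat.le_of_dvd hqpos hdvd
    have hlt : p ^ (j) < p ^ (j + 1) := Nat.pow_lt_pow_right hp.one_lt (by omega)
    omega
  have htrans2' := gen_transitive C hprim hT2mem hT2d (π ^ p ^ (j)) hT2gr
  have hord2 : orderOf (π ^ p ^ (j)) = Fintype.card V :=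
    orderOf_eq_card (π ^ p ^ (j)) u₀ (fun v => htrans2' u₀ v)
  have hordq : orderOf (π ^ p ^ (j)) = p := by
    rw [orderOf_pow, hord, hkT]
    have hgcd : Nat.gcd (p ^ (j + 1)) (p ^ (j)) = p ^ (j) :=
      Nat.gcd_eq_right (pow_dvd_pow p (by omega))
    rw [hgcd, pow_succ, Nat.mul_div_cancel_left _ hqpos]
  have hcardp : Fintype.card V = p := by rw [← hord2, hordq]
  have hordp : orderOf π = p := by rw [hord, hcardp]
  refine ⟨?_, hcardp, ?_⟩
  · intro R hR u
    obtain ⟨m, rfl⟩ := hclassgr R hR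
    rw [hnb, Set.ncard_singleton]
  · intro R hR hRd
    obtain ⟨m, rfl⟩ := hclassgr R hR
    haveI : Fact p.Prime := ⟨hp⟩
    haveI : NeZero p := ⟨hp.ne_zero⟩
    have hm1 : π ^ m ≠ 1 := by
      intro h
      apply hRd
      rw [h]
      ext ⟨u, v⟩
      show v = (1 : Equiv.Perm V) u ↔ u = v
      simp [eq_comm]
    have hpm : ¬ p ∣ m := by
      intro hdvd
      exact hm1 (orderOf_dvd_iff_pow_eq_one.mp (by rw [hordp]; exact hdvd))
    set c : ZMod p := (m : ZMod p) with hc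
    have hc0 : c ≠ 0 := fun h => hpm ((ZMod.natCast_eq_zero_iff m p).mp h)
    set g : ZMod p → V := fun j => (π ^ j.val) u₀ with hgdef
    have hgadd : ∀ (j : ZMod p) (t : ℕ), g (j + (t : ZMod p)) = (π ^ t) (g j) := by
      intro j t
      show (π ^ (j + (t : ZMod p)).val) u₀ = (π ^ t) ((π ^ j.val) u₀)
      have h7 : (π ^ t) ((π ^ j.val) u₀) = (π ^ (t + j.val)) u₀ := by rw [pow_add]; rfl
      rw [h7]
      have hmod : ((j + (t : ZMod p)).val : ℕ) ≡ t + j.val [MOD p] := by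
        apply (ZMod.natCast_eq_natCast_iff _ _ _).mp
        push_cast
        rw [ZMod.natCast_zmod_val, ZMod.natCast_zmod_val]
        ring
      have h8 : π ^ ((j + (t : ZMod p)).val : ℕ) = π ^ (t + j.val) :=
        pow_eq_pow_iff_modEq.mpr (by rw [hordp]; exact hmod)
      rw [h8]
    have key2 : ∀ a b : ZMod p, a.val ≤ b.val → g a = g b → a = b := by
      intro a b h hab
      have hfix : (π ^ (b.val - a.val)) u₀ = u₀ := by
        apply (π ^ a.val).injective
        calc (π ^ a.val) ((π ^ (b.val - a.val)) u₀)
            = (π ^ (a.val + (b.val - a.val))) u₀ := by rw [pow_add]; rfl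
          _ = (π ^ b.val) u₀ := by rw [Nat.add_sub_cancel' h]
          _ = (π ^ a.val) u₀ := hab.symm
      have hone := fix_pow_eq_one π u₀ htrans hfix
      have hdvd : p ∣ b.val - a.val := by
        have h11 := orderOf_dvd_of_pow_eq_one hone
        rwa [hordp] at h11
      have hlt : b.val - a.val < p := lt_of_le_of_lt (Nat.sub_le _ _) (ZMod.val_lt b)
      have h0 : b.val - a.val = 0 := Nat.eq_zero_of_dvd_of_lt hdvd hlt
      have hv : a.val = b.val := by omega
      rw [← ZMod.natCast_zmod_val a, ← ZMod.natCast_zmod_val b, hv]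
    have hginj : Function.Injective g := by
      intro a b hab
      rcases le_total a.val b.val with h | h
      · exact key2 a b h hab
      · exact (key2 b a h hab.symm).symm
    have hgsurj : Function.Surjective g := by
      intro v
      obtain ⟨t, rfl⟩ := htrans v
      refine ⟨(t : ZMod p), ?_⟩
      show (π ^ ((t : ZMod p)).val) u₀ = (π ^ t) u₀
      have h9 : π ^ ((t : ZMod p)).val = π ^ t :=
        pow_eq_pow_iff_modEq.mpr (by rw [hordp, ZMod.val_natCast]; exact Nat.mod_modEq t p)
      rw [h9]
    set e₀ : ZMod p ≃ V := Equiv.ofBijective g ⟨hginj, hgsurj⟩ with he₀def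
    have he₀ : ∀ u : V, g (e₀.symm u) = u := fun u => e₀.apply_symm_apply u
    have hiff : ∀ u v : V, v = (π ^ m) u ↔ e₀.symm v = e₀.symm u + c := by
      intro u v
      constructor
      · intro h
        apply hginj
        show g (e₀.symm v) = g (e₀.symm u + c)
        rw [he₀ v, h, hc, hgadd (e₀.symm u) m, he₀ u]
      · intro h
        calc v = g (e₀.symm v) := (he₀ v).symm
          _ = g (e₀.symm u + c) := by rw [h]
          _ = (π ^ m) (g (e₀.symm u)) := by rw [hc]; exact hgadd (e₀.symm u) m
          _ = (π ^ m) u := by rw [he₀ u]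
    refine ⟨(e₀.symm : V ≃ ZMod p).trans (Equiv.mulLeft₀ c⁻¹ (inv_ne_zero hc0)), ?_⟩
    intro u v
    have hmem : (u, v) ∈ Gr ⇑(π ^ m) ↔ v = (π ^ m) u := Iff.rfl
    rw [hmem, hiff u v]
    show e₀.symm v = e₀.symm u + c ↔ c⁻¹ * e₀.symm v = c⁻¹ * e₀.symm u + 1
    constructor
    · intro h; rw [h, mul_add, inv_mul_cancel₀ hc0]
    · intro h
      have h10 := congrArg (fun x => c * x) h
      rw [mul_add, ← mul_assoc, ← mul_assoc, mul_inv_cancel₀ hc0, one_mul, one_mul, mul_one] at h10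
      exact h10
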